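/- Let n₁ ≥ n₂ be natural numbers and m₁, m₂₁ natural numbers with m₁ + m₂₁ ≤ n₁ and m₂₁ ≤ n₂. Let F₁ be an invertible m₁ × m₁ matrix and F₂₁ an invertible m₂₁ × m₂₁ matrix over 𝔽₂, and define the n₁ × m₁ matrix G₁ = [0^{(n₁ − m₁ − m₂₁) × m₁}; F₁; 0^{m₂₁ × m₁}] and the n₁ × m₂₁ matrix G₂₁ = [0^{(n₂ − m₂₁) × m₂₁}; F₂₁; 0^{(n₁ − n₂) × m₂₁}]. Then the rank over 𝔽₂ of the horizontal concatenation [G₁ | S^{n₁ − n₂} G₂₁], where S is the n₁ × n₁ down-shift matrix, equals m₁ + m₂₁. -/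

import Mathlib

noncomputable section

/-- The `q × q` down-shift matrix over `𝔽₂`: `S i j = 1` iff `i = j + 1`. -/
def shiftMatrix (q : ℕ) : Matrix (Fin q) (Fin q) (ZMod 2) :=
  Matrix.of fun i j => if (i : ℕ) = (j : ℕ) + 1 then 1 else 0

/-- The `q × mm` vertical block matrix whose rows `off, …, off + mm - 1` form `F`
and whose other rows are zero. -/
def blockAt (q mm off : ℕ) (F : Matrix (Fin mm) (Fin mm) (ZMod 2)) :
    Matrix (Fin q) (Fin mm) (ZMod 2) :=
  Matrix.of fun i j =>
    if h : off ≤ (i : ℕ) ∧ (i : ℕ) < off + mm then F ⟨(i : ℕ) - off, by omega⟩ j else 0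

lemma shift_mul_blockAt (q mm off : ℕ) (F : Matrix (Fin mm) (Fin mm) (ZMod 2)) :
    shiftMatrix q * blockAt q mm off F = blockAt q mm (off + 1) F := by
  ext i j
  simp only [Matrix.mul_apply, shiftMatrix, blockAt, Matrix.of_apply]
  rcases Nat.eq_zero_or_pos (i : ℕ) with h0 | h0
  · rw [dif_neg (by omega)]
    apply Finset.sum_eq_zero
    intro k _
    rw [if_neg (by omega), zero_mul]
  · rw [Finset.sum_eq_single (⟨(i : ℕ) - 1, by omega⟩ : Fin q)]
    · rw [if_pos (by simp; omega), one_mul]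
      by_cases h : off + 1 ≤ (i : ℕ) ∧ (i : ℕ) < off + 1 + mm
      · rw [dif_pos (by simp; omega), dif_pos h]
        congr 1
        apply Fin.ext
        simp
        omega
      · rw [dif_neg (by simp; omega), dif_neg h]
    · intro k _ hk
      rw [if_neg, zero_mul]
      intro he
      exact hk (Fin.ext (by simp; omega))
    · intro h
      exact absurd (Finset.mem_univ _) h

lemma shift_pow_mul_blockAt (q mm off r : ℕ) (F : Matrix (Fin mm) (Fin mm) (ZMod 2)) :
    shiftMatrix q ^ r * blockAt q mm off F = blockAt q mm (off + r) F := by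
  induction r with
  | zero => simp
  | succ r ih =>
    rw [pow_succ', Matrix.mul_assoc, ih, shift_mul_blockAt, Nat.add_assoc]

lemma blockAt_mulVec (q mm off : ℕ) (F : Matrix (Fin mm) (Fin mm) (ZMod 2))
    (w : Fin mm → ZMod 2) (i : Fin q) :
    (Matrix.mulVec (blockAt q mm off F) w) i =
      if h : off ≤ (i : ℕ) ∧ (i : ℕ) < off + mm then
        (Matrix.mulVec F w) ⟨(i : ℕ) - off, by omega⟩ else 0 := by
  simp only [Matrix.mulVec, dotProduct, blockAt, Matrix.of_apply]
  by_cases h : off ≤ (i : ℕ) ∧ (i : ℕ) < off + mm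
  · rw [dif_pos h]
    exact Finset.sum_congr rfl fun j _ => by rw [dif_pos h]
  · rw [dif_neg h]
    exact Finset.sum_eq_zero fun j _ => by rw [dif_neg h, zero_mul]

lemma blockAt_mulVec_at (q mm off : ℕ) (F : Matrix (Fin mm) (Fin mm) (ZMod 2))
    (w : Fin mm → ZMod 2) (k : Fin mm) (h : off + mm ≤ q) :
    Matrix.mulVec (blockAt q mm off F) w ⟨off + (k : ℕ), by omega⟩
      = Matrix.mulVec F w k := by
  have hk := k.isLt
  rw [blockAt_mulVec, dif_pos (by simp only [Fin.val_mk]; omega)]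
  congr 1
  apply Fin.ext
  simp only [Fin.val_mk]
  omega

lemma blockAt_mulVec_zero (q mm off : ℕ) (F : Matrix (Fin mm) (Fin mm) (ZMod 2))
    (w : Fin mm → ZMod 2) (i : Fin q) (h : (i : ℕ) < off ∨ off + mm ≤ (i : ℕ)) :
    Matrix.mulVec (blockAt q mm off F) w i = 0 := by
  rw [blockAt_mulVec, dif_neg (by omega)]

theorem rank_concat_two_user (n₁ n₂ m₁ m₂₁ : ℕ) (hn : n₂ ≤ n₁)
    (hm₁ : m₁ + m₂₁ ≤ n₁) (hm₂ : m₂₁ ≤ n₂)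
    (F₁ : Matrix (Fin m₁) (Fin m₁) (ZMod 2))
    (F₂₁ : Matrix (Fin m₂₁) (Fin m₂₁) (ZMod 2))
    (hF₁ : IsUnit F₁) (hF₂₁ : IsUnit F₂₁) :
    (Matrix.fromCols
        (blockAt n₁ m₁ (n₁ - m₁ - m₂₁) F₁)
        (shiftMatrix n₁ ^ (n₁ - n₂) * blockAt n₁ m₂₁ (n₂ - m₂₁) F₂₁)).rank
      = m₁ + m₂₁ := by
  have hshift : shiftMatrix n₁ ^ (n₁ - n₂) * blockAt n₁ m₂₁ (n₂ - m₂₁) F₂₁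
      = blockAt n₁ m₂₁ (n₁ - m₂₁) F₂₁ := by
    rw [shift_pow_mul_blockAt, show n₂ - m₂₁ + (n₁ - n₂) = n₁ - m₂₁ by omega]
  rw [hshift]
  set o₁ := n₁ - m₁ - m₂₁ with ho₁
  set o₂ := n₁ - m₂₁ with ho₂
  set M := Matrix.fromCols (blockAt n₁ m₁ o₁ F₁) (blockAt n₁ m₂₁ o₂ F₂₁) with hM
  have hinj : Function.Injective M.mulVecLin := by
    rw [injective_iff_map_eq_zero]
    intro v hv
    have hvsplit : v = Sum.elim (v ∘ Sum.inl) (v ∘ Sum.inr) := by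
      funext x; cases x <;> rfl
    rw [Matrix.mulVecLin_apply, hM, hvsplit, Matrix.fromCols_mulVec_sumElim] at hv
    have hv' : ∀ i : Fin n₁,
        (Matrix.mulVec (blockAt n₁ m₁ o₁ F₁) (v ∘ Sum.inl)) i
          + (Matrix.mulVec (blockAt n₁ m₂₁ o₂ F₂₁) (v ∘ Sum.inr)) i = 0 := by
      intro i
      exact congrFun hv i
    have h1 : Matrix.mulVec F₁ (v ∘ Sum.inl) = 0 := by
      funext k
      have hk := k.isLt
      have := hv' ⟨o₁ + (k : ℕ), by omega⟩
      rw [blockAt_mulVec_at _ _ _ _ _ _ (by omega),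
        blockAt_mulVec_zero _ _ _ _ _ _ (Or.inl (by simp only [Fin.val_mk]; omega)),
        add_zero] at this
      simpa using this
    have h2 : Matrix.mulVec F₂₁ (v ∘ Sum.inr) = 0 := by
      funext k
      have hk := k.isLt
      have := hv' ⟨o₂ + (k : ℕ), by omega⟩
      rw [blockAt_mulVec_at _ _ _ _ _ _ (by omega),
        blockAt_mulVec_zero _ _ _ _ _ _ (Or.inr (by simp only [Fin.val_mk]; omega)),
        zero_add] at this
      simpa using this
    have hz1 : v ∘ Sum.inl = 0 :=
      (Matrix.mulVec_injective_iff_isUnit.mpr hF₁) (by simpa using h1)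
    have hz2 : v ∘ Sum.inr = 0 :=
      (Matrix.mulVec_injective_iff_isUnit.mpr hF₂₁) (by simpa using h2)
    funext x
    cases x with
    | inl a => exact congrFun hz1 a
    | inr a => exact congrFun hz2 a
  have hr : M.rank = Module.finrank (ZMod 2) ((Fin m₁ ⊕ Fin m₂₁) → ZMod 2) :=
    LinearMap.finrank_range_of_inj hinj
  rw [hr, Module.finrank_fintype_fun_eq_card, Fintype.card_sum, Fintype.card_fin,
    Fintype.card_fin]
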